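/- arXiv:0705.4085 — 5 statements merged into one kernel-verified Lean document; each statement's English description precedes it below -/
import Mathlib

section
/- For all relatively prime integers n and k with 2 ≤ k ≤ n, if ℓ in [1, k-1] satisfies ℓ·n ≡ 1 (mod k), then for all distinct i, j in [0, k-1], i·⌊ℓ·n/k⌋ is not congruent to j·⌊ℓ·n/k⌋ modulo n. -/
/-- For all relatively prime integers `n` and `k` with `2 ≤ k ≤ n`, if `ℓ ∈ [1, k-1]`
satisfies `ℓ·n ≡ 1 (mod k)`, then for all distinct `i, j ∈ [0, k-1]`,
`i·⌊ℓ·n/k⌋ ≢ j·⌊ℓ·n/k⌋ (mod n)`. -/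
theorem stmt_3 (n k : ℤ) (hk : 2 ≤ k) (hkn : k ≤ n) (hgcd : Int.gcd n k = 1)
    (l : ℤ) (hl1 : 1 ≤ l) (hl2 : l ≤ k - 1) (hmod : l * n ≡ 1 [ZMOD k]) :
    ∀ i j : ℤ, 0 ≤ i → i ≤ k - 1 → 0 ≤ j → j ≤ k - 1 → i ≠ j →
      ¬ (i * ((l * n) / k) ≡ j * ((l * n) / k) [ZMOD n]) := by
  intro i j hi0 hi1 hj0 hj1 hij h
  set m := l * n / k with hm
  have hrem : l * n % k = 1 := by
    have h1 : (1 : ℤ) % k = 1 := Int.emod_eq_of_lt (by norm_num) (by omega)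
    have h2 := hmod
    unfold Int.ModEq at h2
    omega
  have hkm : k * m = l * n - 1 := by
    have h3 := Int.mul_ediv_add_emod (l * n) k
    rw [← hm] at h3
    omega
  have hdvd : n ∣ (i - j) * m := by
    have h4 := h.dvd
    rw [show (i - j) * m = -(j * m - i * m) by ring]
    exact dvd_neg.mpr h4
  have hdvd2 : n ∣ (i - j) * (l * n - 1) := by
    rw [← hkm, show (i - j) * (k * m) = k * ((i - j) * m) by ring]
    exact hdvd.mul_left k
  have hdvd3 : n ∣ (i - j) := by
    have h4 : n ∣ (i - j) * (l * n) := ⟨(i - j) * l, by ring⟩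
    have h5 := dvd_sub h4 hdvd2
    rwa [show (i - j) * (l * n) - (i - j) * (l * n - 1) = i - j by ring] at h5
  have habs : |i - j| < n := abs_lt.mpr (by omega)
  have := Int.eq_zero_of_abs_lt_dvd hdvd3 habs
  omega
end

section
/- Let n ≥ k ≥ 2 be integers and let r_i = ⌊i·n/k⌋ for i ∈ ℤ, where indices are taken modulo k and values modulo n. Then for all ℓ ∈ [1, k] and i ∈ [0, k-1], the clockwise distance (r_{i+ℓ} − r_i) mod n lies in {⌊ℓ·n/k⌋, ⌈ℓ·n/k⌉}. -/
/-- The clockwise distance from `x` to `y` on the circle `ℤ/n`: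
the length of the clockwise arc from `x` to `y` (equal to `n` when `y = x`,
corresponding to going once around the circle). -/
def cw (n : ℕ) (x y : ZMod n) : ℕ := if y = x then n else (y - x).val

lemma core_div (a l n k : ℕ) (hk : 0 < k) :
    (a+l)*n/k - a*n/k = l*n/k ∨ (a+l)*n/k - a*n/k = (l*n+k-1)/k := by
  obtain ⟨q1, s1, hs1, h1⟩ : ∃ q s, s < k ∧ a*n = k*q+s :=
    ⟨a*n/k, a*n%k, Nat.mod_lt _ hk, (Nat.div_add_mod _ _).symm⟩
  obtain ⟨q2, s2, hs2, h2⟩ : ∃ q s, s < k ∧ l*n = k*q+s :=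
    ⟨l*n/k, l*n%k, Nat.mod_lt _ hk, (Nat.div_add_mod _ _).symm⟩
  have hM : (a+l)*n = k*(q1+q2) + (s1+s2) := by rw [add_mul, h1, h2]; ring
  have h1' : a*n/k = q1 := by
    rw [h1, Nat.mul_add_div hk, Nat.div_eq_of_lt hs1, add_zero]
  have h2' : l*n/k = q2 := by
    rw [h2, Nat.mul_add_div hk, Nat.div_eq_of_lt hs2, add_zero]
  have hM' : (a+l)*n/k = q1+q2 + (s1+s2)/k := by
    rw [hM, Nat.mul_add_div hk]
  by_cases h : s1+s2 < k
  · left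
    rw [hM', h1', h2', Nat.div_eq_of_lt h]
    omega
  · right
    have hd : (s1+s2)/k = 1 := by
      have h2k : s1+s2 < 2*k := by omega
      rw [Nat.div_eq_sub_div hk (by omega), Nat.div_eq_of_lt (by omega)]
    have hs2' : 1 ≤ s2 := by omega
    have hc : (l*n+k-1)/k = q2 + 1 := by
      have : l*n+k-1 = k*q2 + (s2+k-1) := by omega
      rw [this, Nat.mul_add_div hk,
        Nat.div_eq_sub_div hk (by omega), Nat.div_eq_of_lt (by omega)]
    rw [hM', h1', hc, hd]
    omega

/-- Let `n ≥ k ≥ 2` and let `r_i = ⌊i·n/k⌋` (indices mod `k`, values mod `n`)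
be the Clough–Douthett rhythm. Then for all `ℓ ∈ [1, k]` and all `i`, the
clockwise distance from `r_i` to `r_{i+ℓ}` lies in `{⌊ℓn/k⌋, ⌈ℓn/k⌉}`. -/
theorem stmt_6 (n k : ℕ) (hk : 2 ≤ k) (hkn : k ≤ n) :
    ∀ l : ℕ, 1 ≤ l → l ≤ k → ∀ i : ZMod k,
      cw n ((fun j : ZMod k => ((j.val * n / k : ℕ) : ZMod n)) i)
           ((fun j : ZMod k => ((j.val * n / k : ℕ) : ZMod n)) (i + (l : ZMod k)))
        = l * n / k ∨
      cw n ((fun j : ZMod k => ((j.val * n / k : ℕ) : ZMod n)) i)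
           ((fun j : ZMod k => ((j.val * n / k : ℕ) : ZMod n)) (i + (l : ZMod k)))
        = (l * n + k - 1) / k := by
  intro l hl1 hlk i
  haveI : NeZero k := ⟨by omega⟩
  have hn2 : 2 ≤ n := le_trans hk hkn
  haveI : NeZero n := ⟨by omega⟩
  have hkpos : 0 < k := by omega
  simp only
  rcases eq_or_lt_of_le hlk with hlk' | hlk'
  · -- l = k : wrap-around, distance is n
    subst hlk'
    left
    rw [ZMod.natCast_self, add_zero, cw, if_pos rfl,
      Nat.mul_div_cancel_left n (by omega : 0 < l)]
  · -- l < k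
    set a := i.val with hadef
    have ha' : a < k := i.val_lt
    have hval : (i + (l : ZMod k)).val = (a + l) % k := by
      rw [ZMod.val_add, ZMod.val_natCast, Nat.add_mod a l k,
        Nat.mod_eq_of_lt ha']
    set m := a * n / k with hmdef
    set M := (a + l) * n / k with hMdef
    have hmM : m ≤ M := Nat.div_le_div_right (Nat.mul_le_mul_right n (by omega))
    have hy : (((i + (l : ZMod k)).val * n / k : ℕ) : ZMod n) = ((M : ℕ) : ZMod n) := by
      rw [hval]
      by_cases hc : a + l < k
      · rw [Nat.mod_eq_of_lt hc]
      · have hmod : (a + l) % k = a + l - k := by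
          rw [Nat.mod_eq_sub_mod (by omega), Nat.mod_eq_of_lt (by omega)]
        have hnM : n ≤ M := by
          rw [hMdef, Nat.le_div_iff_mul_le hkpos]
          calc n * k = k * n := mul_comm _ _
          _ ≤ (a + l) * n := Nat.mul_le_mul_right n (by omega)
        have hsub : (a + l - k) * n / k = M - n := by
          rw [Nat.sub_mul, Nat.sub_mul_div _ _ _]
        rw [hmod, hsub, Nat.cast_sub hnM, ZMod.natCast_self, sub_zero]
    have hcore := core_div a l n k hkpos
    rw [← hMdef, ← hmdef] at hcore
    -- bounds
    have hfloor1 : 1 ≤ l * n / k := by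
      rw [Nat.le_div_iff_mul_le hkpos]
      calc 1 * k = k := one_mul k
      _ ≤ n := hkn
      _ = 1 * n := (one_mul n).symm
      _ ≤ l * n := Nat.mul_le_mul_right n hl1
    have h6 : l * n + k ≤ n * k := by
      have h1 : l * n ≤ (k - 1) * n := Nat.mul_le_mul_right n (by omega)
      have h2 : (k - 1) * n + n = k * n := by
        have hk1 : k - 1 + 1 = k := by omega
        calc (k - 1) * n + n = (k - 1 + 1) * n := by rw [add_mul, one_mul]
        _ = k * n := by rw [hk1]
      calc l * n + k ≤ (k - 1) * n + n := add_le_add h1 hkn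
      _ = k * n := h2
      _ = n * k := mul_comm _ _
    have h3 : (l * n + k - 1) / k < n := by
      rw [Nat.div_lt_iff_lt_mul hkpos]
      have : 0 < l * n + k := lt_of_lt_of_le hkpos (Nat.le_add_left k _)
      exact lt_of_lt_of_le (Nat.sub_lt this Nat.one_pos) h6
    have hceil : (l * n + k - 1) / k ≤ n - 1 := Nat.le_sub_one_of_lt h3
    have hflc : l * n / k ≤ (l * n + k - 1) / k := Nat.div_le_div_right (by omega)
    have hd1 : 1 ≤ M - m := by
      rcases hcore with h | h
      · rw [h]; exact hfloor1
      · rw [h]; exact le_trans hfloor1 hflc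
    have hdn : M - m ≤ n - 1 := by
      rcases hcore with h | h
      · rw [h]; exact le_trans hflc hceil
      · rw [h]; exact hceil
    have hsub2 : ((M : ℕ) : ZMod n) - ((m : ℕ) : ZMod n) = ((M - m : ℕ) : ZMod n) :=
      (Nat.cast_sub hmM).symm
    have hvd : ((M - m : ℕ) : ZMod n).val = M - m :=
      ZMod.val_natCast_of_lt (lt_of_le_of_lt hdn (by omega))
    have hne : ((M : ℕ) : ZMod n) ≠ ((m : ℕ) : ZMod n) := by
      intro h
      rw [h, sub_self] at hsub2
      rw [← hsub2, ZMod.val_zero] at hvd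
      omega
    rw [hy, cw, if_neg hne, hsub2, hvd]
    exact hcore
end

section
/- For all integers n and k with 2 ≤ k ≤ n, there is, up to rotation, a unique rhythm with k onsets and timespan n satisfying property (★): for all ℓ ∈ [1, k] and all i, the clockwise distance from r_i to r_{i+ℓ} lies in {⌊ℓn/k⌋, ⌈ℓn/k⌉}. -/
/-- Property (★): for all `ℓ ∈ [1,k]` and all `i`, the clockwise distance from
`r_i` to `r_{i+ℓ}` lies in `{⌊ℓn/k⌋, ⌈ℓn/k⌉}`. -/
def StarProp (n k : ℕ) (r : ZMod k → ZMod n) : Prop :=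
  ∀ l : ℕ, 1 ≤ l → l ≤ k → ∀ i : ZMod k,
    cw n (r i) (r (i + (l : ZMod k))) = l * n / k ∨
    cw n (r i) (r (i + (l : ZMod k))) = (l * n + k - 1) / k

section aux
variable {n k : ℕ}

lemma cwa_cast (hn : 0 < n) (x y : ZMod n) : ((cw n x y : ℕ) : ZMod n) = y - x := by
  haveI : NeZero n := ⟨hn.ne'⟩
  rw [cw]
  split
  · simp [*]
  · exact ZMod.natCast_rightInverse _

lemma cwa_pos (hn : 0 < n) (x y : ZMod n) : 1 ≤ cw n x y := by
  haveI : NeZero n := ⟨hn.ne'⟩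
  rw [cw]; split
  · exact hn
  · rename_i h
    exact ZMod.val_pos.mpr (sub_ne_zero.mpr h)

lemma cwa_le (hn : 0 < n) (x y : ZMod n) : cw n x y ≤ n := by
  haveI : NeZero n := ⟨hn.ne'⟩
  rw [cw]; split
  · exact le_rfl
  · exact (ZMod.val_lt _).le

lemma div_add_div_le (hk : 0 < k) (A B : ℕ) : A / k + B / k ≤ (A + B) / k := by
  rw [Nat.le_div_iff_mul_le hk, add_mul]
  exact Nat.add_le_add (Nat.div_mul_le_self A k) (Nat.div_mul_le_self B k)

lemma div_le_div_add_ceil (hk : 0 < k) (A B : ℕ) :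
    (A + B) / k ≤ A / k + (B + (k - 1)) / k := by
  have h1 := Nat.div_add_mod A k
  have h2 := Nat.mod_lt A hk
  have h : A + B ≤ k * (A / k) + (B + (k - 1)) := by
    conv_lhs => rw [← h1]
    rw [Nat.add_assoc]
    exact Nat.add_le_add_left (by omega) _
  calc (A + B) / k ≤ (k * (A / k) + (B + (k - 1))) / k := Nat.div_le_div_right h
    _ = A / k + (B + (k - 1)) / k := Nat.mul_add_div hk _ _

lemma floor_le_ceil (hk : 0 < k) (A : ℕ) :
    A / k ≤ (A + (k - 1)) / k ∧ (A + (k - 1)) / k ≤ A / k + 1 := by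
  constructor
  · exact Nat.div_le_div_right (Nat.le_add_right _ _)
  · have : A + (k - 1) ≤ A + k := by omega
    calc (A + (k - 1)) / k ≤ (A + k) / k := Nat.div_le_div_right this
      _ = A / k + 1 := Nat.add_div_right A hk

lemma ceil_eq_floor_of_dvd (hk : 0 < k) (A : ℕ) (h : k ∣ A) :
    (A + (k - 1)) / k = A / k := by
  obtain ⟨q, rfl⟩ := h
  rw [Nat.mul_div_cancel_left q hk, Nat.mul_add_div hk, Nat.div_eq_of_lt (by omega)]; omega

lemma floor_bounds (hk : 0 < k) (A : ℕ) :
    k * (A / k) ≤ A ∧ A ≤ k * (A / k) + (k - 1) := by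
  have h1 := Nat.div_add_mod A k
  have h2 := Nat.mod_lt A hk
  omega

lemma ceil_bounds (hk : 0 < k) (A : ℕ) :
    A ≤ k * ((A + (k - 1)) / k) ∧ k * ((A + (k - 1)) / k) ≤ A + (k - 1) := by
  have h1 := Nat.div_add_mod (A + (k - 1)) k
  have h2 := Nat.mod_lt (A + (k - 1)) hk
  omega


lemma sum_cw (hk : 2 ≤ k) (hkn : k ≤ n) {r : ZMod k → ZMod n} (hr : StarProp n k r) :
    ∀ l, 1 ≤ l → l ≤ k → ∀ i : ZMod k,
      ∑ j ∈ Finset.range l, cw n (r (i + (j : ZMod k))) (r (i + (j : ZMod k) + 1)) =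
        cw n (r i) (r (i + (l : ZMod k))) := by
  have hn : 0 < n := by omega
  have hk0 : 0 < k := by omega
  intro l
  induction l with
  | zero => omega
  | succ m ih =>
    intro _ hmk i
    rcases Nat.eq_zero_or_pos m with hm | hm
    · subst hm
      simp [Finset.sum_range_one]
    · have hprev := ih hm (by omega) i
      rw [Finset.sum_range_succ, hprev]
      set P := cw n (r i) (r (i + (m : ZMod k))) with hPdef
      set D := cw n (r (i + (m : ZMod k))) (r (i + (m : ZMod k) + 1)) with hDdef
      set L := cw n (r i) (r (i + ((m + 1 : ℕ) : ZMod k))) with hLdef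
      have hcast : ((P + D : ℕ) : ZMod n) = ((L : ℕ) : ZMod n) := by
        push_cast
        rw [hPdef, hDdef, hLdef, cwa_cast hn, cwa_cast hn, cwa_cast hn]
        have : i + (m : ZMod k) + 1 = i + ((m + 1 : ℕ) : ZMod k) := by push_cast; ring
        rw [this]; ring
      have hmod : (n : ℤ) ∣ (L : ℤ) - ((P : ℤ) + D) := by
        have h := (Nat.modEq_iff_dvd).mp ((ZMod.natCast_eq_natCast_iff _ _ _).mp hcast)
        push_cast at h
        exact h
      -- memberships
      have hP : P = m * n / k ∨ P = (m * n + k - 1) / k := hr m hm (by omega) i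
      have hD : D = 1 * n / k ∨ D = (1 * n + k - 1) / k := by
        have := hr 1 le_rfl (by omega) (i + (m : ZMod k))
        rwa [Nat.cast_one] at this
      have hL : L = (m + 1) * n / k ∨ L = ((m + 1) * n + k - 1) / k := hr (m + 1) (by omega) hmk i
      -- numeric facts
      have e1 : m * n + k - 1 = m * n + (k - 1) := by omega
      have e2 : 1 * n + k - 1 = 1 * n + (k - 1) := by omega
      have e3 : (m + 1) * n + k - 1 = (m + 1) * n + (k - 1) := by omega
      rw [e1] at hP; rw [e2] at hD; rw [e3] at hL
      have hfc1 := floor_le_ceil hk0 (m * n)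
      have hfc2 := floor_le_ceil hk0 (1 * n)
      have hfc3 := floor_le_ceil hk0 ((m + 1) * n)
      have b1 : (m * n + (k - 1)) / k + (1 * n + (k - 1)) / k ≤ ((m + 1) * n + (k - 1)) / k + 1 := by
        have h1 := div_add_div_le hk0 (m * n + (k - 1)) (1 * n + (k - 1))
        have h2 : m * n + (k - 1) + (1 * n + (k - 1)) ≤ (m + 1) * n + (k - 1) + k := by
          have : (m + 1) * n = m * n + n := by ring
          omega
        have h3 := Nat.div_le_div_right (c := k) h2
        rw [Nat.add_div_right _ hk0] at h3
        omega
      have b3 : ((m + 1) * n + (k - 1)) / k ≤ n := by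
        have h2 : (m + 1) * n + (k - 1) ≤ k * n + (k - 1) := by
          have := Nat.mul_le_mul_right n hmk
          omega
        have h3 := Nat.div_le_div_right (c := k) h2
        rwa [Nat.mul_add_div hk0, Nat.div_eq_of_lt (show k - 1 < k by omega), Nat.add_zero] at h3
      have hcase : ((m + 1) * n + (k - 1)) / k = (m + 1) * n / k ∨ 3 ≤ n := by
        by_cases hd : k ∣ (m + 1) * n
        · exact Or.inl (ceil_eq_floor_of_dvd hk0 _ hd)
        · right
          by_contra hn3
          have hn2 : n = 2 := by omega
          have hk2 : k = 2 := by omega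
          exact hd (by rw [hk2, hn2]; exact Dvd.intro (m+1) (by ring))
      have hPp := cwa_pos hn (r i) (r (i + (m : ZMod k)))
      have hDp := cwa_pos hn (r (i + (m : ZMod k))) (r (i + (m : ZMod k) + 1))
      have hLp := cwa_pos hn (r i) (r (i + ((m + 1 : ℕ) : ZMod k)))
      have hLle := cwa_le hn (r i) (r (i + ((m + 1 : ℕ) : ZMod k)))
      rw [← hPdef] at hPp; rw [← hDdef] at hDp; rw [← hLdef] at hLp hLle
      have habs : |(L : ℤ) - ((P : ℤ) + D)| < n := by
        rw [abs_lt]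
        omega
      have h0 := Int.eq_zero_of_abs_lt_dvd hmod habs
      omega

lemma repr_lemma (hn : 0 < n) (hk0 : 0 < k) (r : ZMod k → ZMod n) (x : ZMod k) :
    r x = r 0 +
      ((∑ j ∈ Finset.range x.val, cw n (r (j : ZMod k)) (r ((j : ZMod k) + 1)) : ℕ) : ZMod n) := by
  haveI : NeZero n := ⟨hn.ne'⟩
  haveI : NeZero k := ⟨hk0.ne'⟩
  have hterm : ∀ j : ℕ, ((cw n (r (j : ZMod k)) (r ((j : ZMod k) + 1)) : ℕ) : ZMod n) =
      (fun j : ℕ => r (j : ZMod k)) (j + 1) - (fun j : ℕ => r (j : ZMod k)) j := by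
    intro j
    rw [cwa_cast hn]
    simp only []
    congr 2
    push_cast
    ring
  have hsum : ((∑ j ∈ Finset.range x.val, cw n (r (j : ZMod k)) (r ((j : ZMod k) + 1)) : ℕ) : ZMod n)
      = r x - r 0 := by
    rw [Nat.cast_sum, Finset.sum_congr rfl (fun j _ => hterm j),
      Finset.sum_range_sub (fun j : ℕ => r (j : ZMod k)) x.val]
    rw [ZMod.natCast_rightInverse x]
    norm_num
  rw [hsum]
  ring

lemma exists_e (hk : 2 ≤ k) (hkn : k ≤ n) {r : ZMod k → ZMod n} (hr : StarProp n k r) :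
    ∃ e : ℕ, e < k ∧ ((Nat.gcd n k : ℤ) ∣ ((k : ℤ) - 1 - (e : ℤ))) ∧
      ∀ i, i ≤ k →
        (∑ j ∈ Finset.range i, cw n (r (j : ZMod k)) (r ((j : ZMod k) + 1))) = (i * n + e) / k := by
  have hn : 0 < n := by omega
  have hk0 : 0 < k := by omega
  set S : ℕ → ℕ := fun i => ∑ j ∈ Finset.range i, cw n (r (j : ZMod k)) (r ((j : ZMod k) + 1))
    with hSdef
  -- difference of partial sums
  have hSv : ∀ i j : ℕ, i < j → j ≤ k → ∃ v : ℕ, S j = S i + v ∧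
      (v = (j - i) * n / k ∨ v = ((j - i) * n + k - 1) / k) := by
    intro i j hij hjk
    refine ⟨cw n (r (i : ZMod k)) (r ((i : ZMod k) + ((j - i : ℕ) : ZMod k))), ?_,
      hr (j - i) (by omega) (by omega) (i : ZMod k)⟩
    have hsplit : S j = S i + ∑ j' ∈ Finset.Ico i j, cw n (r (j' : ZMod k)) (r ((j' : ZMod k) + 1)) := by
      rw [hSdef]
      simp only [Finset.range_eq_Ico]
      rw [← Finset.sum_Ico_consecutive _ (Nat.zero_le i) (le_of_lt hij)]
    rw [hsplit]
    congr 1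
    rw [Finset.sum_Ico_eq_sum_range]
    rw [← sum_cw hk hkn hr (j - i) (by omega) (by omega) (i : ZMod k)]
    apply Finset.sum_congr rfl
    intro m _
    have h1 : ((i + m : ℕ) : ZMod k) = (i : ZMod k) + (m : ZMod k) := by push_cast; ring
    rw [h1]
  -- integer sequence
  set a : ℕ → ℤ := fun i => ((k * S i : ℕ) : ℤ) - ((i * n : ℕ) : ℤ) with hadef
  have hbound : ∀ i j : ℕ, i ≤ k → j ≤ k → a j - a i ≤ (k : ℤ) - 1 := by
    have key : ∀ i j : ℕ, i < j → j ≤ k → a j - a i ≤ (k : ℤ) - 1 ∧ a i - a j ≤ (k : ℤ) - 1 := by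
      intro i j hij hjk
      obtain ⟨v, hSj, hv⟩ := hSv i j hij hjk
      set l := j - i with hl
      have hkS : k * S j = k * S i + k * v := by rw [hSj]; ring
      have hjn : j * n = i * n + l * n := by
        have : j = i + l := by omega
        rw [this]; ring
      have hdiff : a j - a i = ((k * v : ℕ) : ℤ) - ((l * n : ℕ) : ℤ) := by
        rw [hadef]
        simp only []
        rw [hkS, hjn]
        push_cast
        ring
      have hfb := floor_bounds hk0 (l * n)
      have hcb := ceil_bounds hk0 (l * n)
      have e1 : l * n + k - 1 = l * n + (k - 1) := by omega
      rw [e1] at hv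
      rcases hv with hv | hv <;> rw [hv] at hdiff <;>
        exact ⟨by omega, by omega⟩
    intro i j hik hjk
    rcases lt_trichotomy i j with h | h | h
    · exact (key i j h hjk).1
    · rw [h]; omega
    · exact (key j i h hik).2
  have hS0 : S 0 = 0 := by simp [hSdef]
  have ha0 : a 0 = 0 := by rw [hadef]; simp [hS0]
  obtain ⟨i₀, hi₀mem, hmin⟩ :=
    Finset.exists_min_image (Finset.range (k + 1)) a ⟨0, by simp⟩
  set m := a i₀ with hmdef
  have hm0 : m ≤ 0 := by
    have := hmin 0 (by simp)
    omega
  have hmge : -((k : ℤ) - 1) ≤ m := by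
    have := hbound i₀ 0 (by simp at hi₀mem; omega) (by omega)
    omega
  refine ⟨(m + ((k : ℤ) - 1)).toNat, ?_, ?_, ?_⟩
  · omega
  · have he : (((m + ((k : ℤ) - 1)).toNat : ℕ) : ℤ) = m + ((k : ℤ) - 1) := by omega
    rw [he]
    have : (k : ℤ) - 1 - (m + ((k : ℤ) - 1)) = -m := by ring
    rw [this]
    have hdk : ((Nat.gcd n k : ℕ) : ℤ) ∣ ((k * S i₀ : ℕ) : ℤ) := by
      push_cast
      exact Dvd.dvd.mul_right (Int.natCast_dvd_natCast.mpr (Nat.gcd_dvd_right n k)) _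
    have hdn : ((Nat.gcd n k : ℕ) : ℤ) ∣ ((i₀ * n : ℕ) : ℤ) := by
      push_cast
      exact Dvd.dvd.mul_left (Int.natCast_dvd_natCast.mpr (Nat.gcd_dvd_left n k)) _
    have : m = ((k * S i₀ : ℕ) : ℤ) - ((i₀ * n : ℕ) : ℤ) := by rw [hmdef, hadef]
    rw [this]
    exact dvd_neg.mpr (dvd_sub hdk hdn)
  · intro i hik
    show S i = _
    have h1 : m ≤ a i := hmin i (by simp; omega)
    have h2 : a i ≤ m + ((k : ℤ) - 1) := by
      have := hbound i₀ i (by simp at hi₀mem; omega) hik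
      omega
    have he : (((m + ((k : ℤ) - 1)).toNat : ℕ) : ℤ) = m + ((k : ℤ) - 1) := by omega
    have hai : a i = ((k * S i : ℕ) : ℤ) - ((i * n : ℕ) : ℤ) := by rw [hadef]
    rw [hai] at h1 h2
    set e : ℕ := (m + ((k : ℤ) - 1)).toNat with hedef
    have hlo : k * S i ≤ i * n + e := by
      have : ((k * S i : ℕ) : ℤ) ≤ ((i * n : ℕ) : ℤ) + (e : ℤ) := by rw [he]; omega
      push_cast at this
      omega
    have hhi : i * n + e < k * S i + k := by
      have : ((i * n : ℕ) : ℤ) + (e : ℤ) < ((k * S i : ℕ) : ℤ) + k := by rw [he]; omega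
      push_cast at this
      omega
    have hmc : (S i + 1) * k = k * S i + k := by ring
    have := Nat.div_eq_of_lt_le (n := k) (k := S i) (m := i * n + e)
      (by rw [mul_comm]; omega) (by omega)
    omega

lemma exists_part (hk : 2 ≤ k) (hkn : k ≤ n) :
    ∃ r : ZMod k → ZMod n, Function.Injective r ∧ StarProp n k r := by
  have hn : 0 < n := by omega
  have hk0 : 0 < k := by omega
  haveI : NeZero n := ⟨hn.ne'⟩
  haveI : NeZero k := ⟨hk0.ne'⟩
  have hmono : ∀ a b : ℕ, a < b → a * n / k + 1 ≤ b * n / k := by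
    intro a b hab
    have h1 : a * n + k ≤ b * n := by
      have h2 : (a + 1) * n ≤ b * n := Nat.mul_le_mul_right n hab
      have h3 : (a + 1) * n = a * n + n := by ring
      omega
    calc a * n / k + 1 = (a * n + k) / k := (Nat.add_div_right _ hk0).symm
      _ ≤ b * n / k := Nat.div_le_div_right h1
  have hlt : ∀ a : ℕ, a < k → a * n / k < n := by
    intro a ha
    rw [Nat.div_lt_iff_lt_mul hk0]
    calc a * n < k * n := by
          exact Nat.mul_lt_mul_of_lt_of_le ha le_rfl hn
      _ = n * k := by ring
  have hval : ∀ i : ZMod k, ((i.val * n / k : ℕ) : ZMod n).val = i.val * n / k := by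
    intro i
    rw [ZMod.val_natCast, Nat.mod_eq_of_lt (hlt _ (ZMod.val_lt i))]
  refine ⟨fun i => ((i.val * n / k : ℕ) : ZMod n), ?_, ?_⟩
  · intro i j h
    simp only [] at h
    have hv := congrArg ZMod.val h
    rw [hval i, hval j] at hv
    have hij : i.val = j.val := by
      rcases lt_trichotomy i.val j.val with h' | h' | h'
      · have := hmono _ _ h'; omega
      · exact h'
      · have := hmono _ _ h'; omega
    have h1 : ((i.val : ℕ) : ZMod k) = ((j.val : ℕ) : ZMod k) := by rw [hij]
    rwa [ZMod.natCast_rightInverse i, ZMod.natCast_rightInverse j] at h1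
  · intro l hl1 hlk i
    simp only []
    have ha : i.val < k := ZMod.val_lt i
    have hx : i + (l : ZMod k) = (((i.val + l) % k : ℕ) : ZMod k) := by
      rw [ZMod.natCast_mod]
      push_cast
      rw [ZMod.natCast_rightInverse i]
    have hblt : (i.val + l) % k < k := Nat.mod_lt _ hk0
    have hbval : (i + (l : ZMod k)).val = (i.val + l) % k := by
      rw [hx, ZMod.val_natCast, Nat.mod_eq_of_lt hblt]
    rw [hbval]
    have hdm := Nat.div_add_mod (i.val + l) k
    have hwlt : (i.val + l) / k ≤ 1 := by
      have : (i.val + l) / k < 2 := by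
        rw [Nat.div_lt_iff_lt_mul hk0]
        omega
      omega
    have hfc := floor_le_ceil hk0 (l * n)
    have hfl1 : 1 ≤ l * n / k := by
      rw [Nat.one_le_div_iff hk0]
      calc k ≤ n := hkn
        _ = 1 * n := (one_mul n).symm
        _ ≤ l * n := Nat.mul_le_mul_right n hl1
    have e3 : l * n + k - 1 = l * n + (k - 1) := by omega
    rw [e3]
    generalize hw : (i.val + l) / k = w at hdm hwlt
    generalize hb : (i.val + l) % k = b at hdm hblt ⊢
    generalize hA : i.val = a at ha hdm ⊢
    have k1 := div_add_div_le hk0 (a * n) (l * n)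
    have k2 := div_le_div_add_ceil hk0 (a * n) (l * n)
    have hlta := hlt a ha
    have hltb := hlt b hblt
    interval_cases w
    · -- no wrap : b = a + l
      have hbeq : b = a + l := by omega
      subst hbeq
      have h4 : (a + l) * n = a * n + l * n := by ring
      rw [← h4] at k1 k2
      have hab : a < a + l := by omega
      have hmab := hmono a (a + l) hab
      have hne : (((a + l) * n / k : ℕ) : ZMod n) ≠ ((a * n / k : ℕ) : ZMod n) := by
        intro hcon
        have := congrArg ZMod.val hcon
        rw [ZMod.val_natCast, ZMod.val_natCast, Nat.mod_eq_of_lt hltb,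
          Nat.mod_eq_of_lt hlta] at this
        omega
      rw [cw, if_neg hne]
      have hle : a * n / k ≤ (a + l) * n / k := by omega
      have hsac := Nat.sub_add_cancel hle
      rw [← Nat.cast_sub hle, ZMod.val_natCast,
        Nat.mod_eq_of_lt (lt_of_le_of_lt (Nat.sub_le _ _) hltb)]
      omega
    · -- wrap once : k + b = a + l
      have hkb : b + k = a + l := by omega
      by_cases hba : b = a
      · have hlk' : l = k := by omega
        have hrfl : (((b * n / k : ℕ) : ZMod n) : ZMod n) = ((a * n / k : ℕ) : ZMod n) := by
          rw [hba]
        rw [cw, if_pos hrfl]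
        left
        rw [hlk', Nat.mul_div_cancel_left n hk0]
      · have hba' : b < a := by omega
        have hmba := hmono b a hba'
        have h4 : (b + k) * n = b * n + k * n := by ring
        have h5 : (a + l) * n = a * n + l * n := by ring
        have h7 : (b + k) * n = (a + l) * n := by rw [hkb]
        have h8 : a * n + l * n = b * n + k * n := by omega
        have key2 : (a * n + l * n) / k = b * n / k + n := by
          rw [h8, Nat.add_mul_div_left _ _ hk0]
        have hne : ((b * n / k : ℕ) : ZMod n) ≠ ((a * n / k : ℕ) : ZMod n) := by
          intro hcon
          have := congrArg ZMod.val hcon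
          rw [ZMod.val_natCast, ZMod.val_natCast, Nat.mod_eq_of_lt hltb,
            Nat.mod_eq_of_lt hlta] at this
          omega
        rw [cw, if_neg hne]
        have h9 : a * n / k ≤ b * n / k + n := by omega
        have hsac := Nat.sub_add_cancel h9
        have hzeq : ((b * n / k : ℕ) : ZMod n) - ((a * n / k : ℕ) : ZMod n)
            = ((b * n / k + n - a * n / k : ℕ) : ZMod n) := by
          rw [Nat.cast_sub h9]
          push_cast [ZMod.natCast_self]
          ring
        rw [hzeq, ZMod.val_natCast, Nat.mod_eq_of_lt (by omega)]
        omega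

lemma unique_part (hk : 2 ≤ k) (hkn : k ≤ n) {r r' : ZMod k → ZMod n}
    (hr : StarProp n k r) (hr' : StarProp n k r') :
    ∃ Δ : ZMod n, Set.range r' = (fun x => x + Δ) '' Set.range r := by
  have hn : 0 < n := by omega
  have hk0 : 0 < k := by omega
  haveI : NeZero n := ⟨hn.ne'⟩
  haveI : NeZero k := ⟨hk0.ne'⟩
  obtain ⟨e, hek, hge, hSe⟩ := exists_e hk hkn hr
  obtain ⟨e', he'k, hge', hSe'⟩ := exists_e hk hkn hr'
  -- Bezout : find t, u with t*n + e = k*u + e'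
  have bez := Nat.gcd_eq_gcd_ab n k
  have hdvd : ((Nat.gcd n k : ℕ) : ℤ) ∣ (e' : ℤ) - (e : ℤ) := by
    have h1 : (e' : ℤ) - e = ((k : ℤ) - 1 - e) - ((k : ℤ) - 1 - e') := by ring
    rw [h1]
    exact dvd_sub hge hge'
  obtain ⟨c0, hc0⟩ := hdvd
  have hkne : (k : ℤ) ≠ 0 := by exact_mod_cast hk0.ne'
  have htznn : 0 ≤ (Nat.gcdA n k * c0) % (k : ℤ) := Int.emod_nonneg _ hkne
  set tz : ℤ := (Nat.gcdA n k * c0) % (k : ℤ) with htzdef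
  have hkdvd1 : (k : ℤ) ∣ tz - Nat.gcdA n k * c0 :=
    ⟨-(Nat.gcdA n k * c0 / k), by rw [htzdef, Int.emod_def]; ring⟩
  obtain ⟨q1, hq1⟩ := hkdvd1
  have hkd : (k : ℤ) ∣ tz * n + e - e' := by
    refine ⟨q1 * n - c0 * Nat.gcdB n k, ?_⟩
    have : tz = Nat.gcdA n k * c0 + k * q1 := by linarith
    rw [this]
    linear_combination (-c0 : ℤ) * bez - hc0
  obtain ⟨u', hu'⟩ := hkd
  have hgt : tz * n + e - e' > -(k : ℤ) := by
    have h2 : 0 ≤ tz * n := mul_nonneg htznn (by positivity)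
    omega
  have hu'nn : 0 ≤ u' := by
    by_contra hcon
    push_neg at hcon
    have h8 : (k : ℤ) * u' ≤ (k : ℤ) * (-1) :=
      mul_le_mul_of_nonneg_left (by omega) (by positivity)
    rw [mul_neg_one] at h8
    omega
  set t : ℕ := tz.toNat with htdef
  have htcast : (t : ℤ) = tz := Int.toNat_of_nonneg htznn
  set u : ℕ := u'.toNat with hudef
  have hucast : (u : ℤ) = u' := Int.toNat_of_nonneg hu'nn
  have hu : t * n + e = k * u + e' := by
    have h9 : ((t * n + e : ℕ) : ℤ) = ((k * u + e' : ℕ) : ℤ) := by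
      push_cast
      rw [htcast, hucast]
      omega
    exact_mod_cast h9
  -- pointwise relation
  have hpoint : ∀ i : ZMod k,
      r' i = r (i + (t : ZMod k)) + (r' 0 - r 0 - ((u : ℕ) : ZMod n)) := by
    intro i
    have hiv : i.val < k := ZMod.val_lt i
    have hrep' := repr_lemma hn hk0 r' i
    rw [hSe' i.val (by omega)] at hrep'
    have hxeq : i + (t : ZMod k) = (((i.val + t) % k : ℕ) : ZMod k) := by
      rw [ZMod.natCast_mod]
      push_cast
      rw [ZMod.natCast_rightInverse i]
    have hxval : (i + (t : ZMod k)).val = (i.val + t) % k := by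
      rw [hxeq, ZMod.val_natCast, Nat.mod_eq_of_lt (Nat.mod_lt _ hk0)]
    have hrep := repr_lemma hn hk0 r (i + (t : ZMod k))
    rw [hxval, hSe ((i.val + t) % k) (le_of_lt (Nat.mod_lt _ hk0))] at hrep
    -- arithmetic
    have hdm := Nat.div_add_mod (i.val + t) k
    have harith : ((i.val + t) % k * n + e) / k + ((i.val + t) / k) * n
        = (i.val * n + e') / k + u := by
      have h1 : (i.val + t) % k * n + e + k * (((i.val + t) / k) * n)
          = (i.val * n + e') + k * u := by
        have h2 : ((i.val + t) % k + k * ((i.val + t) / k)) * n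
            = (i.val + t) % k * n + k * (((i.val + t) / k) * n) := by ring
        have h3 : ((i.val + t) % k + k * ((i.val + t) / k)) * n = (i.val + t) * n := by
          rw [show (i.val + t) % k + k * ((i.val + t) / k) = i.val + t by omega]
        have h5 : (i.val + t) * n = i.val * n + t * n := by ring
        omega
      calc ((i.val + t) % k * n + e) / k + ((i.val + t) / k) * n
          = ((i.val + t) % k * n + e + k * (((i.val + t) / k) * n)) / k :=
            (Nat.add_mul_div_left _ _ hk0).symm
        _ = ((i.val * n + e') + k * u) / k := by rw [h1]
        _ = (i.val * n + e') / k + u := Nat.add_mul_div_left _ _ hk0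
    have hc2 : ((((i.val + t) / k) * n : ℕ) : ZMod n) = 0 := by
      push_cast [ZMod.natCast_self]
      ring
    have hcast3 : ((((i.val + t) % k * n + e) / k : ℕ) : ZMod n)
        = (((i.val * n + e') / k : ℕ) : ZMod n) + ((u : ℕ) : ZMod n) := by
      have := congrArg (fun z : ℕ => (z : ZMod n)) harith
      simp only [Nat.cast_add] at this
      rw [hc2, add_zero] at this
      rw [this]
    rw [hrep', hrep, hcast3]
    ring
  refine ⟨r' 0 - r 0 - ((u : ℕ) : ZMod n), ?_⟩
  ext z
  simp only [Set.mem_range, Set.mem_image]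
  constructor
  · rintro ⟨i, rfl⟩
    exact ⟨r (i + (t : ZMod k)), ⟨i + (t : ZMod k), rfl⟩, (hpoint i).symm⟩
  · rintro ⟨y, ⟨i, rfl⟩, rfl⟩
    refine ⟨i - (t : ZMod k), ?_⟩
    rw [hpoint (i - (t : ZMod k)), sub_add_cancel]


/-- For all integers `2 ≤ k ≤ n` there is, up to rotation, a unique rhythm with
`k` onsets and timespan `n` satisfying property (★). -/
theorem stmt_8 (n k : ℕ) (hk : 2 ≤ k) (hkn : k ≤ n) :
    (∃ r : ZMod k → ZMod n, Function.Injective r ∧ StarProp n k r) ∧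
    (∀ r r' : ZMod k → ZMod n,
      Function.Injective r → StarProp n k r →
      Function.Injective r' → StarProp n k r' →
      ∃ Δ : ZMod n, Set.range r' = (fun x => x + Δ) '' Set.range r) := by
  exact ⟨exists_part hk hkn, fun r r' _ hr _ hr' => unique_part hk hkn hr hr'⟩
end aux
end

section
/- If k ≤ ⌊n/2⌋ + 1 and gcd(m, n) = 1, then the map i ↦ i·m mod n is injective on [0, k−1], and for 0 ≤ p < q ≤ ⌊n/2⌋ the geodesic distances min(p·m mod n, (−p·m) mod n) and min(q·m mod n, (−q·m) mod n) are distinct. -/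
/-- The geodesic distance between `x` and `y` on the circle `ℤ/n`. -/
def geo (n : ℕ) (x y : ZMod n) : ℕ := min (y - x).val (x - y).val

/-- If `k ≤ ⌊n/2⌋ + 1` and `gcd(m,n) = 1`, the map `i ↦ i·m mod n` is injective
on `[0, k-1]`, and for `0 ≤ p < q ≤ ⌊n/2⌋` the geodesic distances
`min(p·m mod n, (−p·m) mod n)` and `min(q·m mod n, (−q·m) mod n)` are distinct. -/
theorem stmt_13 (n k m : ℕ) (hn : 0 < n) (hm : 0 < m) (hk : 0 < k)
    (hkn : k ≤ n / 2 + 1) (hgcd : Nat.gcd m n = 1) :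
    (∀ i j : ℕ, i ≤ k - 1 → j ≤ k - 1 →
        ((i * m : ℕ) : ZMod n) = ((j * m : ℕ) : ZMod n) → i = j) ∧
    (∀ p q : ℕ, p < q → q ≤ n / 2 →
        geo n 0 ((p * m : ℕ) : ZMod n) ≠ geo n 0 ((q * m : ℕ) : ZMod n)) := by
  haveI : NeZero n := ⟨hn.ne'⟩
  have hu : IsUnit (m : ZMod n) := (ZMod.isUnit_iff_coprime m n).mpr hgcd
  -- cancellation lemma
  have cancel : ∀ a b : ℕ, ((a * m : ℕ) : ZMod n) = ((b * m : ℕ) : ZMod n) →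
      (a : ZMod n) = b := by
    intro a b h
    push_cast at h
    exact hu.mul_right_cancel h
  constructor
  · intro i j hi hj h
    have hi' : i < n := by omega
    have hj' : j < n := by omega
    have := cancel i j h
    have := (ZMod.natCast_eq_natCast_iff' i j n).mp this
    rwa [Nat.mod_eq_of_lt hi', Nat.mod_eq_of_lt hj'] at this
  · intro p q hpq hq h
    have hq1 : 1 ≤ q := by omega
    have hn2 : 2 ≤ n := by omega
    have hpn : p < n := by omega
    have hqn : q < n := by omega
    have hpqn : p + q < n := by omega
    set a : ZMod n := ((p * m : ℕ) : ZMod n)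
    set b : ZMod n := ((q * m : ℕ) : ZMod n)
    have hab : a = b ∨ a = -b := by
      simp only [geo, sub_zero, zero_sub] at h
      have h4 : a.val = b.val ∨ a.val = (-b).val ∨ (-a).val = b.val ∨ (-a).val = (-b).val := by
        rcases min_cases a.val (-a).val with ⟨h1, -⟩ | ⟨h1, -⟩ <;>
          rcases min_cases b.val (-b).val with ⟨h2, -⟩ | ⟨h2, -⟩ <;> omega
      rcases h4 with h4 | h4 | h4 | h4
      · exact Or.inl (ZMod.val_injective n h4)
      · exact Or.inr (ZMod.val_injective n h4)
      · right; have := ZMod.val_injective n h4; linear_combination -this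
      · left; have := ZMod.val_injective n h4; linear_combination -this
    rcases hab with hab | hab
    · have := cancel p q hab
      have := (ZMod.natCast_eq_natCast_iff' p q n).mp this
      rw [Nat.mod_eq_of_lt hpn, Nat.mod_eq_of_lt hqn] at this
      omega
    · have h0 : (((p + q) * m : ℕ) : ZMod n) = ((0 * m : ℕ) : ZMod n) := by
        push_cast
        push_cast [a, b] at hab
        ring_nf
        ring_nf at hab
        linear_combination hab
      have := cancel (p + q) 0 h0
      have := (ZMod.natCast_eq_natCast_iff' (p + q) 0 n).mp this
      rw [Nat.mod_eq_of_lt hpqn, Nat.zero_mod] at this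
      omega
end

section
/- For m with gcd(m, n) = 1 and k ≤ ⌊n/2⌋ + 1, removing the onset (k−1)·m mod n from D_{k,n,m} yields D_{k−1,n,m}, which is again Erdős-deep; hence every generated rhythm D_{k,n,m} with these parameters has a shelling. -/
/-- The multiset of pairwise geodesic distances between distinct onsets of `R`. -/
def pairDists (n : ℕ) (R : Finset (ZMod n)) : Multiset ℕ :=
  (R.sym2.filter fun s => ¬ s.IsDiag).val.map
    (Sym2.lift ⟨geo n, fun a b => by unfold geo; rw [min_comm]⟩)

/-- A rhythm is Erdős-deep if for each `i ∈ [1, k-1]` (where `k` is the number of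
onsets) there is exactly one nonzero geodesic distance occurring exactly `i`
times in the multiset of pairwise geodesic distances. -/
def ErdosDeep (n : ℕ) (R : Finset (ZMod n)) : Prop :=
  ∀ i : ℕ, 1 ≤ i → i ≤ R.card - 1 →
    ∃! d : ℕ, d ≠ 0 ∧ Multiset.count d (pairDists n R) = i

/-- The generated rhythm `D_{k,n,m} = {i·m mod n : 0 ≤ i ≤ k-1}` of timespan `n`. -/
def genRhythm (k n m : ℕ) : Finset (ZMod n) :=
  (Finset.range k).image (fun i => ((i * m : ℕ) : ZMod n))

namespace Stmt17Aux

variable {n m : ℕ}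

/-- The onset map. -/
def f (n m : ℕ) (i : ℕ) : ZMod n := ((i * m : ℕ) : ZMod n)

/-- geodesic distance to 0 of `d·m`. -/
def gg (n m d : ℕ) : ℕ := geo n 0 (f n m d)

lemma injf (hgcd : Nat.gcd m n = 1) {a b : ℕ} (ha : a < n) (hb : b < n)
    (h : f n m a = f n m b) : a = b := by
  unfold f at h
  rw [ZMod.natCast_eq_natCast_iff] at h
  have h2 : a ≡ b [MOD n] := Nat.ModEq.cancel_right_of_coprime (Nat.coprime_comm.mp hgcd) h
  unfold Nat.ModEq at h2
  rwa [Nat.mod_eq_of_lt ha, Nat.mod_eq_of_lt hb] at h2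

lemma geo_f {i j : ℕ} (hij : i ≤ j) : geo n (f n m i) (f n m j) = gg n m (j - i) := by
  have hsub : f n m j - f n m i = f n m (j - i) := by
    unfold f
    have : (j - i) * m = j * m - i * m := by rw [Nat.sub_mul]
    rw [this, Nat.cast_sub (Nat.mul_le_mul_right m hij)]
  unfold gg geo
  rw [sub_zero, zero_sub, hsub]
  have : f n m i - f n m j = -(f n m j - f n m i) := by ring
  rw [this, hsub]

lemma gg_ne_zero (hn : 0 < n) (hgcd : Nat.gcd m n = 1) {d : ℕ} (hd1 : 1 ≤ d)
    (hd2 : d ≤ n / 2) : gg n m d ≠ 0 := by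
  haveI : NeZero n := ⟨hn.ne'⟩
  have hfz : f n m d ≠ 0 := by
    intro h
    unfold f at h
    rw [ZMod.natCast_eq_zero_iff] at h
    have hnm : Nat.Coprime n m := Nat.coprime_comm.mp hgcd
    have : n ∣ d := hnm.dvd_of_dvd_mul_right h
    have := Nat.le_of_dvd hd1 this
    omega
  unfold gg geo
  rw [sub_zero, zero_sub, ZMod.neg_val, if_neg hfz]
  have hv1 : (f n m d).val ≠ 0 := fun h => hfz ((ZMod.val_eq_zero _).mp h)
  have hv2 : (f n m d).val < n := ZMod.val_lt _
  omega

lemma gg_inj (hn : 0 < n) (hgcd : Nat.gcd m n = 1) {d e : ℕ} (hd1 : 1 ≤ d)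
    (hd2 : d ≤ n / 2) (he1 : 1 ≤ e) (he2 : e ≤ n / 2) (h : gg n m d = gg n m e) :
    d = e := by
  haveI : NeZero n := ⟨hn.ne'⟩
  have hnm : Nat.Coprime n m := Nat.coprime_comm.mp hgcd
  have key : ∀ c : ℕ, 1 ≤ c → c ≤ n / 2 → (f n m c).val = c * m % n ∧ c * m % n ≠ 0 := by
    intro c hc1 hc2
    constructor
    · exact ZMod.val_natCast _ _
    · intro hz
      have : n ∣ c := hnm.dvd_of_dvd_mul_right (Nat.dvd_of_mod_eq_zero hz)
      have := Nat.le_of_dvd hc1 this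
      omega
  obtain ⟨hda, hdz⟩ := key d hd1 hd2
  obtain ⟨hea, hez⟩ := key e he1 he2
  set a := d * m % n with ha
  set b := e * m % n with hb
  have hfd : (f n m d) ≠ 0 := by
    intro hh; rw [hh] at hda; simp [ZMod.val_zero] at hda; exact hdz hda.symm
  have hfe : (f n m e) ≠ 0 := by
    intro hh; rw [hh] at hea; simp [ZMod.val_zero] at hea; exact hez hea.symm
  have hgd : gg n m d = min a (n - a) := by
    unfold gg geo; rw [sub_zero, zero_sub, ZMod.neg_val, if_neg hfd, hda]
  have hge : gg n m e = min b (n - b) := by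
    unfold gg geo; rw [sub_zero, zero_sub, ZMod.neg_val, if_neg hfe, hea]
  rw [hgd, hge] at h
  have haln : a < n := Nat.mod_lt _ hn
  have hbln : b < n := Nat.mod_lt _ hn
  have hcase : a = b ∨ a + b = n := by
    rw [Nat.min_def, Nat.min_def] at h
    split_ifs at h <;> omega
  rcases hcase with hc | hc
  · -- d*m ≡ e*m [MOD n]
    have hmeq : d * m ≡ e * m [MOD n] := hc
    have h2 := Nat.ModEq.cancel_right_of_coprime (Nat.coprime_comm.mp hgcd) hmeq
    unfold Nat.ModEq at h2
    rw [Nat.mod_eq_of_lt (by omega), Nat.mod_eq_of_lt (by omega)] at h2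
    exact h2
  · -- n ∣ (d+e)*m
    have hmod : (d + e) * m % n = 0 := by
      have : (d + e) * m = d * m + e * m := by ring
      rw [this, Nat.add_mod, ← ha, ← hb, hc, Nat.mod_self]
    have hdvd : n ∣ d + e := hnm.dvd_of_dvd_mul_right (Nat.dvd_of_mod_eq_zero hmod)
    have hle := Nat.le_of_dvd (by omega) hdvd
    have : d + e = n := by
      rcases hdvd with ⟨c, hcc⟩
      have : d + e ≤ n := by omega
      omega
    omega

/-- The recursion for pairDists under inserting a new element. -/
lemma pairDists_insert {n : ℕ} (a : ZMod n) (R : Finset (ZMod n)) (ha : a ∉ R) :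
    pairDists n (insert a R) = R.val.map (geo n a) + pairDists n R := by
  classical
  rw [← Finset.cons_eq_insert a R ha]
  unfold pairDists
  rw [Finset.sym2_cons]
  have hval : ∀ (s t : Finset (Sym2 (ZMod n))) (h : Disjoint s t) (p : Sym2 (ZMod n) → Prop)
      [DecidablePred p], ((s.disjUnion t h).filter p).val = (s.filter p).val + (t.filter p).val := by
    intro s t h p _
    rw [Finset.filter_val, Finset.filter_val, Finset.filter_val]
    show Multiset.filter p (s.val + t.val) = _
    rw [Multiset.filter_add]
  rw [hval, Multiset.map_add]
  congr 1
  -- first summand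
  rw [Finset.filter_map]
  have hfil : (Finset.cons a R ha).filter ((fun s => ¬ s.IsDiag) ∘ (Sym2.mkEmbedding a)) = R := by
    rw [Finset.filter_cons]
    have : ¬ ((fun s => ¬ s.IsDiag) ∘ (Sym2.mkEmbedding a)) a := by
      simp [Sym2.mkEmbedding]
      exact (Sym2.mk_isDiag_iff (x := a) (y := a)).mpr rfl
    rw [if_neg this]
    apply Finset.filter_true_of_mem
    intro b hb
    simp only [Function.comp, Sym2.mkEmbedding, Function.Embedding.coeFn_mk,
      Sym2.mk_isDiag_iff]
    intro hab
    exact ha ((Sym2.mk_isDiag_iff (x := a) (y := b)).mp hab ▸ hb)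
  rw [hfil]
  rw [Finset.map_val, Multiset.map_map]
  rfl

lemma genRhythm_val (hgcd : Nat.gcd m n = 1) {k : ℕ} (hkn : k ≤ n) :
    (genRhythm k n m).val = (Finset.range k).val.map (f n m) := by
  unfold genRhythm
  rw [Finset.image_val]
  have hnd : (Multiset.map (fun i => ((i * m : ℕ) : ZMod n)) (Finset.range k).val).Nodup :=
    Multiset.Nodup.map_on
      (fun a hha b hhb hab => injf hgcd
        (lt_of_lt_of_le (Finset.mem_range.mp (by exact hha)) hkn)
        (lt_of_lt_of_le (Finset.mem_range.mp (by exact hhb)) hkn) hab)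
      (Finset.range k).nodup
  rw [Multiset.dedup_eq_self.2 hnd]
  rfl

lemma f_not_mem (hgcd : Nat.gcd m n = 1) {k : ℕ} (hkn : k < n) :
    f n m k ∉ genRhythm k n m := by
  unfold genRhythm
  rw [Finset.mem_image]
  rintro ⟨i, hi, hfi⟩
  rw [Finset.mem_range] at hi
  exact absurd (injf hgcd (by omega) hkn hfi) (by omega)

lemma genRhythm_succ (k : ℕ) : genRhythm (k + 1) n m = insert (f n m k) (genRhythm k n m) := by
  unfold genRhythm
  rw [Finset.range_add_one, Finset.image_insert]
  rfl

lemma pairDists_gen (hgcd : Nat.gcd m n = 1) {k : ℕ} (hkn : k < n) :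
    pairDists n (genRhythm (k + 1) n m) =
      (Finset.range k).val.map (fun i => gg n m (k - i)) + pairDists n (genRhythm k n m) := by
  rw [genRhythm_succ, pairDists_insert _ _ (f_not_mem hgcd hkn),
    genRhythm_val hgcd (le_of_lt hkn), Multiset.map_map]
  congr 1
  apply Multiset.map_congr rfl
  intro i hi
  have hik : i < k := Finset.mem_range.mp hi
  show geo n (f n m k) (f n m i) = gg n m (k - i)
  rw [show geo n (f n m k) (f n m i) = geo n (f n m i) (f n m k) by
    unfold geo; rw [min_comm]]
  exact geo_f (le_of_lt hik)

lemma pairDists_zero : pairDists n (genRhythm 0 n m) = 0 := by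
  unfold genRhythm pairDists
  simp

lemma count_pd (hn : 0 < n) (hgcd : Nat.gcd m n = 1) {k d : ℕ} (hk : k ≤ n / 2 + 1)
    (hd1 : 1 ≤ d) (hd2 : d ≤ n / 2) :
    Multiset.count (gg n m d) (pairDists n (genRhythm k n m)) = k - d := by
  induction k with
  | zero => rw [pairDists_zero]; simp
  | succ k ih =>
    have hkn2 : k ≤ n / 2 := by omega
    have hkn : k < n := by omega
    rw [pairDists_gen hgcd hkn, Multiset.count_add, ih (by omega)]
    have hchunk : Multiset.count (gg n m d) ((Finset.range k).val.map (fun i => gg n m (k - i)))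
        = if d ≤ k then 1 else 0 := by
      rw [Multiset.count_map]
      have : Multiset.filter (fun i => gg n m d = gg n m (k - i)) (Finset.range k).val
          = if d ≤ k then {k - d} else 0 := by
        split_ifs with hdk
        · apply Multiset.ext.mpr
          intro j
          rw [Multiset.count_filter]
          by_cases hj : gg n m d = gg n m (k - j) ∧ j ∈ Finset.range k
          · obtain ⟨hj1, hj2⟩ := hj
            rw [Finset.mem_range] at hj2
            have : d = k - j := gg_inj hn hgcd hd1 hd2 (by omega) (by omega) hj1
            have hj' : j = k - d := by omega
            rw [if_pos hj1, hj']
            have : Multiset.count (k - d) (Finset.range k).val = 1 := by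
              rw [Finset.range_val, Multiset.count_eq_one_of_mem (Multiset.nodup_range k)]
              rw [Multiset.mem_range]; omega
            rw [this]
            simp
          · push_neg at hj
            by_cases hj1 : gg n m d = gg n m (k - j)
            · have hj2 := hj hj1
              rw [if_pos hj1]
              rw [Multiset.count_eq_zero.mpr (by rwa [← Finset.mem_def])]
              have : j ≠ k - d := by
                intro hh
                exact hj2 (Finset.mem_range.mpr (by omega))
              rw [Multiset.count_singleton, if_neg this]
            · rw [if_neg hj1]
              have : (k - d) ≠ j := by
                intro hh
                apply hj1
                rw [← hh]
                congr 1
                omega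
              rw [Multiset.count_singleton, if_neg (Ne.symm this)]
        · rw [Multiset.filter_eq_nil.mpr]
          intro j hj
          rw [← Finset.mem_def, Finset.mem_range] at hj
          intro hgge
          have : d = k - j := gg_inj hn hgcd hd1 hd2 (by omega) (by omega) hgge
          omega
      rw [this]
      split_ifs <;> simp
    rw [hchunk]
    split_ifs with hdk <;> omega

lemma mem_pd (hgcd : Nat.gcd m n = 1) {k : ℕ} (hk : k ≤ n) {v : ℕ}
    (hv : v ∈ pairDists n (genRhythm k n m)) :
    ∃ d : ℕ, 1 ≤ d ∧ d ≤ k - 1 ∧ v = gg n m d := by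
  induction k with
  | zero => rw [pairDists_zero] at hv; simp at hv
  | succ k ih =>
    rw [pairDists_gen hgcd (by omega), Multiset.mem_add] at hv
    rcases hv with hv | hv
    · rw [Multiset.mem_map] at hv
      obtain ⟨i, hi, hgi⟩ := hv
      rw [← Finset.mem_def, Finset.mem_range] at hi
      exact ⟨k - i, by omega, by omega, hgi.symm⟩
    · obtain ⟨d, hd1, hd2, hd3⟩ := ih (by omega) hv
      exact ⟨d, hd1, by omega, hd3⟩

lemma card_gen (hgcd : Nat.gcd m n = 1) {k : ℕ} (hk : k ≤ n) :
    (genRhythm k n m).card = k := by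
  rw [Finset.card_def, genRhythm_val hgcd hk, Multiset.card_map]
  simp

lemma k_le_n (hn : 0 < n) {k : ℕ} (hk : k ≤ n / 2 + 1) : k ≤ n := by omega

/-- Main lemma: every generated rhythm with `k ≤ n/2 + 1` is Erdős-deep. -/
lemma deep (hn : 0 < n) (hgcd : Nat.gcd m n = 1) {k : ℕ} (hk : k ≤ n / 2 + 1) :
    ErdosDeep n (genRhythm k n m) := by
  intro t ht1 ht2
  rw [card_gen hgcd (k_le_n hn hk)] at ht2
  have hkt1 : 1 ≤ k - t := by omega
  have hkt2 : k - t ≤ n / 2 := by omega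
  refine ⟨gg n m (k - t), ⟨gg_ne_zero hn hgcd hkt1 hkt2, ?_⟩, ?_⟩
  · rw [count_pd hn hgcd hk hkt1 hkt2]; omega
  · rintro v ⟨hv0, hvc⟩
    have hvm : v ∈ pairDists n (genRhythm k n m) := by
      rw [← Multiset.count_pos, hvc]; omega
    obtain ⟨e, he1, he2, he3⟩ := mem_pd hgcd (k_le_n hn hk) hvm
    rw [he3, count_pd hn hgcd hk he1 (by omega)] at hvc
    rw [he3]
    congr 1
    omega

end Stmt17Aux

open Stmt17Aux in
/-- For `gcd(m,n) = 1` and `k ≤ ⌊n/2⌋ + 1`, removing the onset `(k-1)·m mod n`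
from `D_{k,n,m}` yields `D_{k-1,n,m}`, which is again Erdős-deep; hence every
such generated rhythm has a shelling. -/
theorem stmt_17 (n k m : ℕ) (hn : 0 < n) (hm : 0 < m) (hk : 1 ≤ k)
    (hkn : k ≤ n / 2 + 1) (hgcd : Nat.gcd m n = 1) :
    (genRhythm k n m).erase (((k - 1) * m : ℕ) : ZMod n) = genRhythm (k - 1) n m ∧
    ErdosDeep n (genRhythm (k - 1) n m) ∧
    (∃ l : List (ZMod n), l.Nodup ∧ l.toFinset = genRhythm k n m ∧
      ∀ i : ℕ, i ≤ l.length → ErdosDeep n (genRhythm k n m \ (l.take i).toFinset)) := by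
  have hkn' : k ≤ n := k_le_n hn hkn
  refine ⟨?_, ?_, ?_⟩
  · -- erase
    obtain ⟨k', rfl⟩ : ∃ k', k = k' + 1 := ⟨k - 1, by omega⟩
    simp only [Nat.add_sub_cancel]
    rw [genRhythm_succ]
    exact Finset.erase_insert (f_not_mem hgcd (by omega))
  · exact deep hn hgcd (by omega)
  · -- shelling
    refine ⟨(List.range k).map (fun j => f n m (k - 1 - j)), ?_, ?_, ?_⟩
    · apply List.Nodup.map_on _ List.nodup_range
      intro x hx y hy hxy
      rw [List.mem_range] at hx hy
      have := injf hgcd (a := k - 1 - x) (b := k - 1 - y) (by omega) (by omega) hxy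
      omega
    · ext x
      rw [List.mem_toFinset, List.mem_map]
      unfold genRhythm
      rw [Finset.mem_image]
      constructor
      · rintro ⟨j, hj, hjx⟩
        rw [List.mem_range] at hj
        exact ⟨k - 1 - j, Finset.mem_range.mpr (by omega), hjx⟩
      · rintro ⟨i, hi, hix⟩
        rw [Finset.mem_range] at hi
        refine ⟨k - 1 - i, List.mem_range.mpr (by omega), ?_⟩
        show f n m (k - 1 - (k - 1 - i)) = x
        rw [show k - 1 - (k - 1 - i) = i by omega]
        exact hix
    · intro i hi
      rw [List.length_map, List.length_range] at hi
      have hset : genRhythm k n m \ (((List.range k).map (fun j => f n m (k - 1 - j))).take i).toFinset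
          = genRhythm (k - i) n m := by
        rw [← List.map_take, List.take_range, min_eq_left hi]
        ext x
        rw [Finset.mem_sdiff, List.mem_toFinset, List.mem_map]
        unfold genRhythm
        rw [Finset.mem_image, Finset.mem_image]
        constructor
        · rintro ⟨⟨a, ha, hax⟩, hnot⟩
          rw [Finset.mem_range] at ha
          refine ⟨a, Finset.mem_range.mpr ?_, hax⟩
          by_contra hcon
          push_neg at hcon
          exact hnot ⟨k - 1 - a, List.mem_range.mpr (by omega), by
            rw [show k - 1 - (k - 1 - a) = a by omega]; exact hax⟩
        · rintro ⟨a, ha, hax⟩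
          rw [Finset.mem_range] at ha
          refine ⟨⟨a, Finset.mem_range.mpr (by omega), hax⟩, ?_⟩
          rintro ⟨j, hj, hjx⟩
          rw [List.mem_range] at hj
          have : k - 1 - j = a := injf hgcd (by omega) (by omega) (hjx.trans hax.symm)
          omega
      rw [hset]
      exact deep hn hgcd (by omega)
end
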